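/- Under losses in [0,1] and budget assumption (B_i ≥ c_k + c_j for all k,j), each client i running OFMS-FT with FFD clustering satisfies R_{i,T} ≤ (ln K)/η_i + η_i·μ_i·T, where R_{i,T} is the expected regret against the best fixed model in hindsight. -/

import Mathlib

open MeasureTheory
open Finset

lemma exp_neg_le_quad {x : ℝ} (hx : 0 ≤ x) :
    Real.exp (-x) ≤ 1 - x + x ^ 2 / 2 := by
  set f : ℝ → ℝ := fun y => 1 - y + y ^ 2 / 2 - Real.exp (-y) with hf
  have hd : ∀ y : ℝ, HasDerivAt f (-1 + y + Real.exp (-y)) y := by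
    intro y
    have h1 : HasDerivAt (fun y : ℝ => Real.exp (-y)) (-Real.exp (-y)) y := by
      simpa using (hasDerivAt_neg y).exp
    have h2 : HasDerivAt (fun y : ℝ => 1 - y + y ^ 2 / 2) (-1 + y) y := by
      have := ((hasDerivAt_const y (1:ℝ)).sub (hasDerivAt_id y)).add
        (((hasDerivAt_pow 2 y)).div_const 2)
      exact this.congr_deriv (by norm_num)
    exact (h2.sub h1).congr_deriv (by ring)
  have hmono : MonotoneOn f (Set.Ici (0:ℝ)) := by
    apply monotoneOn_of_deriv_nonneg (convex_Ici 0)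
    · exact (Continuous.continuousOn (by fun_prop))
    · intro y hy
      exact (hd y).differentiableAt.differentiableWithinAt
    · intro y hy
      rw [(hd y).deriv]
      have := Real.add_one_le_exp (-y)
      linarith
  have h0 : f 0 = 0 := by simp [hf]
  have := hmono (Set.self_mem_Ici) (Set.mem_Ici.mpr hx) hx
  rw [h0] at this
  simp only [hf] at this
  linarith



lemma det_regret {K : ℕ} (hK : 1 ≤ K) {η : ℝ} (hη : 0 < η) (T : ℕ)
    (ℓ : Fin K → ℕ → ℝ) (hℓ : ∀ k t, 1 ≤ t → 0 ≤ ℓ k t)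
    (w : Fin K → ℕ → ℝ) (hw1 : ∀ k, w k 1 = 1)
    (hwrec : ∀ k t, w k (t + 1) = w k t * Real.exp (-η * ℓ k t))
    (p : Fin K → ℕ → ℝ) (hp : ∀ k t, p k t = w k t / ∑ j, w j t)
    (k : Fin K) :
    ∑ t ∈ Icc 1 T, ∑ j, p j t * ℓ j t ≤
      (∑ t ∈ Icc 1 T, ℓ k t) + Real.log K / η
        + η / 2 * ∑ t ∈ Icc 1 T, ∑ j, p j t * ℓ j t ^ 2 := by
  haveI : NeZero K := ⟨by omega⟩
  have hwpos : ∀ t, 1 ≤ t → ∀ j, 0 < w j t := by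
    intro t ht
    induction t, ht using Nat.le_induction with
    | base => intro j; rw [hw1]; norm_num
    | succ t ht ih =>
      intro j; rw [hwrec]
      exact mul_pos (ih j) (Real.exp_pos _)
  have hSpos : ∀ t, 1 ≤ t → 0 < ∑ j, w j t := fun t ht =>
    Finset.sum_pos (fun j _ => hwpos t ht j) univ_nonempty
  have hppos : ∀ t, 1 ≤ t → ∀ j, 0 < p j t := by
    intro t ht j; rw [hp]; exact div_pos (hwpos t ht j) (hSpos t ht)
  have hpsum : ∀ t, 1 ≤ t → ∑ j, p j t = 1 := by
    intro t ht
    simp only [hp, ← Finset.sum_div]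
    exact div_self (hSpos t ht).ne'
  -- per-step bound
  have step : ∀ t, 1 ≤ t →
      Real.log (∑ j, w j (t + 1)) - Real.log (∑ j, w j t) ≤
        -(η * ∑ j, p j t * ℓ j t) + η ^ 2 / 2 * ∑ j, p j t * ℓ j t ^ 2 := by
    intro t ht
    set S := ∑ j, w j t with hS
    have hS0 : 0 < S := hSpos t ht
    have hr : (∑ j, w j (t + 1)) = S * ∑ j, p j t * Real.exp (-η * ℓ j t) := by
      rw [Finset.mul_sum]
      refine Finset.sum_congr rfl fun j _ => ?_
      rw [hwrec, hp]
      field_simp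
      rw [← hS, mul_div_assoc, div_self hS0.ne', mul_one]
    have hrpos : 0 < ∑ j, p j t * Real.exp (-η * ℓ j t) :=
      Finset.sum_pos (fun j _ => mul_pos (hppos t ht j) (Real.exp_pos _)) univ_nonempty
    have hlog : Real.log (∑ j, w j (t + 1)) - Real.log S =
        Real.log (∑ j, p j t * Real.exp (-η * ℓ j t)) := by
      rw [hr, Real.log_mul hS0.ne' hrpos.ne']; ring
    rw [hlog]
    have hub : (∑ j, p j t * Real.exp (-η * ℓ j t)) ≤
        1 + (-(η * ∑ j, p j t * ℓ j t) + η ^ 2 / 2 * ∑ j, p j t * ℓ j t ^ 2) := by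
      have : ∀ j ∈ univ, p j t * Real.exp (-η * ℓ j t) ≤
          p j t * (1 - η * ℓ j t + (η * ℓ j t) ^ 2 / 2) := by
        intro j _
        refine mul_le_mul_of_nonneg_left ?_ (hppos t ht j).le
        have := exp_neg_le_quad (mul_nonneg hη.le (hℓ j t ht))
        simpa [neg_mul] using this
      calc (∑ j, p j t * Real.exp (-η * ℓ j t))
          ≤ ∑ j, p j t * (1 - η * ℓ j t + (η * ℓ j t) ^ 2 / 2) :=
            Finset.sum_le_sum this
        _ = (∑ j, p j t) - η * ∑ j, p j t * ℓ j t
            + η ^ 2 / 2 * ∑ j, p j t * ℓ j t ^ 2 := by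
            have e : ∀ j : Fin K, p j t * (1 - η * ℓ j t + (η * ℓ j t) ^ 2 / 2)
                = (p j t - η * (p j t * ℓ j t)) + η ^ 2 / 2 * (p j t * ℓ j t ^ 2) :=
              fun j => by ring
            simp_rw [e]
            rw [Finset.sum_add_distrib, Finset.sum_sub_distrib,
              ← Finset.mul_sum, ← Finset.mul_sum]
        _ = 1 + (-(η * ∑ j, p j t * ℓ j t) + η ^ 2 / 2 * ∑ j, p j t * ℓ j t ^ 2) := by
            rw [hpsum t ht]; ring
    have := Real.log_le_sub_one_of_pos hrpos
    linarith
  -- telescoping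
  have htel : Real.log (∑ j, w j (T + 1)) - Real.log (∑ j, w j 1) ≤
      -(η * ∑ t ∈ Icc 1 T, ∑ j, p j t * ℓ j t)
        + η ^ 2 / 2 * ∑ t ∈ Icc 1 T, ∑ j, p j t * ℓ j t ^ 2 := by
    have h2 : ∀ f : ℕ → ℝ, ∑ t ∈ Icc 1 T, f t = ∑ i ∈ range T, f (i + 1) := by
      intro f
      induction T with
      | zero => simp
      | succ T ih => rw [Finset.sum_Icc_succ_top (by omega : 1 ≤ T + 1), ih,
          Finset.sum_range_succ]
    have h1 : Real.log (∑ j, w j (T + 1)) - Real.log (∑ j, w j 1) =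
        ∑ i ∈ range T, (Real.log (∑ j, w j (i + 1 + 1)) - Real.log (∑ j, w j (i + 1))) := by
      rw [Finset.sum_range_sub (fun i => Real.log (∑ j, w j (i + 1)))]
    rw [h1, h2 (fun t => ∑ j, p j t * ℓ j t), h2 (fun t => ∑ j, p j t * ℓ j t ^ 2)]
    calc ∑ i ∈ range T, (Real.log (∑ j, w j (i + 1 + 1)) - Real.log (∑ j, w j (i + 1)))
        ≤ ∑ i ∈ range T, (-(η * ∑ j, p j (i + 1) * ℓ j (i + 1))
            + η ^ 2 / 2 * ∑ j, p j (i + 1) * ℓ j (i + 1) ^ 2) :=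
          Finset.sum_le_sum fun i _ => step (i + 1) (by omega)
      _ = -(η * ∑ i ∈ range T, ∑ j, p j (i + 1) * ℓ j (i + 1))
            + η ^ 2 / 2 * ∑ i ∈ range T, ∑ j, p j (i + 1) * ℓ j (i + 1) ^ 2 := by
          rw [Finset.sum_add_distrib, Finset.mul_sum, Finset.mul_sum]
          congr 1
          exact Finset.sum_neg_distrib _
  -- lower bound on final weight
  have hwk : ∀ t : ℕ, w k (t + 1) = Real.exp (-η * ∑ s ∈ Icc 1 t, ℓ k s) := by
    intro t
    induction t with
    | zero => simp [hw1]
    | succ t ih =>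
      rw [hwrec, ih, ← Real.exp_add, Finset.sum_Icc_succ_top (by omega : 1 ≤ t + 1)]
      ring_nf
  have hlb : -η * ∑ t ∈ Icc 1 T, ℓ k t ≤ Real.log (∑ j, w j (T + 1)) := by
    have hle : w k (T + 1) ≤ ∑ j, w j (T + 1) :=
      Finset.single_le_sum (fun j _ => (hwpos (T + 1) (by omega) j).le) (mem_univ k)
    have := Real.log_le_log (hwpos (T + 1) (by omega) k) hle
    rwa [hwk, Real.log_exp] at this
  have hS1 : Real.log (∑ j, w j 1) = Real.log K := by
    have : (∑ j : Fin K, w j 1) = K := by simp [hw1]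
    rw [this]
  rw [hS1] at htel
  have hdiv : Real.log K / η * η = Real.log K := div_mul_cancel₀ _ hη.ne'
  nlinarith [htel, hlb, hη]


section helper
variable {Ω : Type*} [m0 : MeasurableSpace Ω] {μ : Measure Ω} [IsProbabilityMeasure μ]

lemma bdd_integrable {m : MeasurableSpace Ω} (hm : m ≤ m0) (f : Ω → ℝ)
    (hf : Measurable[m] f) (C : ℝ) (hC : ∀ ω, |f ω| ≤ C) : Integrable f μ := by
  refine (integrable_const C).mono' ?_ (ae_of_all μ fun ω => by
    simpa [Real.norm_eq_abs] using hC ω)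
  exact (hf.mono hm le_rfl).aestronglyMeasurable

lemma key_exchange {m' : MeasurableSpace Ω} (hm : m' ≤ m0)
    (χf qf : Ω → ℝ) (hχint : Integrable χf μ)
    (hχmean : μ[χf | m'] =ᵐ[μ] qf)
    (g : Ω → ℝ) (C : ℝ) (hg : Measurable[m'] g) (hgC : ∀ ω, |g ω| ≤ C) :
    ∫ ω, g ω * χf ω ∂μ = ∫ ω, g ω * qf ω ∂μ := by
  have h2 := condExp_stronglyMeasurable_mul_of_bound hm
    (Measurable.stronglyMeasurable hg) hχint C
    (ae_of_all μ fun ω => by simpa [Real.norm_eq_abs] using hgC ω)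
  calc ∫ ω, g ω * χf ω ∂μ = ∫ ω, (g * χf) ω ∂μ := rfl
    _ = ∫ ω, (μ[g * χf | m']) ω ∂μ := (integral_condExp hm).symm
    _ = ∫ ω, (g * μ[χf | m']) ω ∂μ := integral_congr_ae h2
    _ = ∫ ω, g ω * qf ω ∂μ := integral_congr_ae (by
        filter_upwards [hχmean] with ω h
        simp [h])

end helper


/-- Client regret bound in OFMS-FT (Theorem 1, eq. (7)).  Client `i` keeps weights
`z` updated multiplicatively with importance-sampled loss estimates
`ℓ̂ k t = χ k t * Lval k t / q k t`, samples its model from `p k t = z k t / ∑ j z j t`,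
and stores model `k` with probability `q k t = p k t + ∑_{j ≠ k} p j t / m j t`,
where the FFD clustering guarantee gives `m j t ≤ 2 μcl`.  Losses lie in `[0,1]`.
The expected regret against any fixed model `k` is at most `ln K / η + η μcl T`. -/
theorem stmt_16 {Ω : Type*} [m0 : MeasurableSpace Ω]
    (μ : Measure Ω) [IsProbabilityMeasure μ]
    (K T : ℕ) (hK : 1 ≤ K) (η : ℝ) (hη : 0 < η)
    (μcl : ℝ) (hμcl : 1 ≤ μcl)
    (ℱ : ℕ → MeasurableSpace Ω) (hℱ : ∀ t, ℱ t ≤ m0)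
    (hℱmono : Monotone ℱ)
    -- realized losses 𝓛(f_k(x_{i,t};θ_{k,t}), y_{i,t}) ∈ [0,1], known at round t
    (Lval : Fin K → ℕ → Ω → ℝ)
    (hLmeas : ∀ k t, StronglyMeasurable[ℱ t] (Lval k t))
    (hL0 : ∀ k t ω, 0 ≤ Lval k t ω) (hL1 : ∀ k t ω, Lval k t ω ≤ 1)
    -- numbers of clusters formed when model j is chosen, bounded via FFD by 2 μcl
    (m : Fin K → ℕ → Ω → ℝ)
    (hm1 : ∀ j t ω, 1 ≤ m j t ω) (hm2 : ∀ j t ω, m j t ω ≤ 2 * μcl)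
    -- weights, sampling probabilities and storage probabilities
    (z p q : Fin K → ℕ → Ω → ℝ)
    (hz1 : ∀ k ω, z k 1 ω = 1)
    (hp : ∀ k t ω, p k t ω = z k t ω / ∑ j, z j t ω)
    (hq : ∀ k t ω, q k t ω = p k t ω + ∑ j ∈ Finset.univ.erase k, p j t ω / m j t ω)
    (hqmeas : ∀ k t, StronglyMeasurable[ℱ t] (q k t))
    -- 0/1 indicator of the event {model k is stored by the client at round t}
    (χ : Fin K → ℕ → Ω → ℝ)
    (hχ : ∀ k t ω, χ k t ω = 0 ∨ χ k t ω = 1)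
    (hχmeas : ∀ k t, StronglyMeasurable[ℱ (t + 1)] (χ k t))
    (hχmean : ∀ k t, μ[χ k t | ℱ t] =ᵐ[μ] q k t)
    -- importance-sampled loss estimates and the multiplicative weights update
    (ℓhat : Fin K → ℕ → Ω → ℝ)
    (hℓhat : ∀ k t ω, ℓhat k t ω = χ k t ω * Lval k t ω / q k t ω)
    (hzrec : ∀ k t ω, z k (t + 1) ω = z k t ω * Real.exp (-η * ℓhat k t ω)) :
    ∀ k : Fin K,
      ∑ t ∈ Finset.Icc 1 T, (∫ ω, ∑ j, p j t ω * Lval j t ω ∂μ) -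
          ∑ t ∈ Finset.Icc 1 T, (∫ ω, Lval k t ω ∂μ) ≤
        Real.log K / η + η * μcl * T := by
  intro k
  haveI : NeZero K := ⟨by omega⟩
  have hμcl0 : (0:ℝ) < 2 * μcl := by linarith
  -- positivity of weights and probabilities
  have hwpos : ∀ t, 1 ≤ t → ∀ j ω, 0 < z j t ω := by
    intro t ht
    induction t, ht using Nat.le_induction with
    | base => intro j ω; rw [hz1]; norm_num
    | succ t ht ih => intro j ω; rw [hzrec]; exact mul_pos (ih j ω) (Real.exp_pos _)
  have hSpos : ∀ t, 1 ≤ t → ∀ ω, 0 < ∑ j, z j t ω := fun t ht ω =>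
    Finset.sum_pos (fun j _ => hwpos t ht j ω) univ_nonempty
  have hppos : ∀ j t, 1 ≤ t → ∀ ω, 0 < p j t ω := by
    intro j t ht ω; rw [hp]; exact div_pos (hwpos t ht j ω) (hSpos t ht ω)
  have hpsum : ∀ t, 1 ≤ t → ∀ ω, ∑ j, p j t ω = 1 := by
    intro t ht ω; simp only [hp, ← Finset.sum_div]; exact div_self (hSpos t ht ω).ne'
  have hple1 : ∀ j t, 1 ≤ t → ∀ ω, p j t ω ≤ 1 := by
    intro j t ht ω
    have h := Finset.single_le_sum (f := fun i => p i t ω)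
      (fun i _ => (hppos i t ht ω).le) (mem_univ j)
    rwa [hpsum t ht ω] at h
  -- lower bound on q
  have hqlb : ∀ j t, 1 ≤ t → ∀ ω, 1 / (2 * μcl) ≤ q j t ω := by
    intro j t ht ω
    rw [hq]
    calc 1 / (2 * μcl)
        = (∑ l, p l t ω) / (2 * μcl) := by rw [hpsum t ht ω]
      _ = p j t ω / (2 * μcl) + ∑ l ∈ Finset.univ.erase j, p l t ω / (2 * μcl) := by
          rw [← Finset.add_sum_erase _ _ (mem_univ j), add_div, Finset.sum_div]
      _ ≤ p j t ω + ∑ l ∈ Finset.univ.erase j, p l t ω / m l t ω := by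
          gcongr with l hl
          · exact div_le_self (hppos j t ht ω).le (by linarith)
          · exact (hppos l t ht ω).le
          · exact lt_of_lt_of_le one_pos (hm1 l t ω)
          · exact hm2 l t ω
  have hqpos : ∀ j t, 1 ≤ t → ∀ ω, 0 < q j t ω := fun j t ht ω =>
    lt_of_lt_of_le (by positivity) (hqlb j t ht ω)
  -- generic division bound
  have hdivbd : ∀ (x y c : ℝ), 0 < c → 0 ≤ x → x ≤ 1 → 1 / c ≤ y → x / y ≤ c := by
    intro x y c hc hx0 hx1 hy
    have hy0 : 0 < y := lt_of_lt_of_le (by positivity) hy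
    rw [div_le_iff₀ hy0]
    have h1 : (1:ℝ) ≤ c * y := by
      have h2 := mul_le_mul_of_nonneg_left hy hc.le
      rw [mul_one_div, div_self hc.ne'] at h2
      linarith
    nlinarith
  -- bounds on ℓhat
  have hℓ0 : ∀ j t, 1 ≤ t → ∀ ω, 0 ≤ ℓhat j t ω := by
    intro j t ht ω
    rw [hℓhat]
    have hχ0 : 0 ≤ χ j t ω := by rcases hχ j t ω with h | h <;> simp [h]
    exact div_nonneg (mul_nonneg hχ0 (hL0 j t ω)) (hqpos j t ht ω).le
  have hχL1 : ∀ j t ω, χ j t ω * Lval j t ω ≤ 1 := by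
    intro j t ω
    rcases hχ j t ω with h | h <;> simp [h]
    exact hL1 j t ω
  have hχL0 : ∀ j t ω, 0 ≤ χ j t ω * Lval j t ω := by
    intro j t ω
    rcases hχ j t ω with h | h <;> simp [h, hL0 j t ω]
  have hℓub : ∀ j t, 1 ≤ t → ∀ ω, ℓhat j t ω ≤ 2 * μcl := by
    intro j t ht ω
    rw [hℓhat]
    exact hdivbd _ _ _ hμcl0 (hχL0 j t ω) (hχL1 j t ω) (hqlb j t ht ω)
  -- measurability
  have hLm : ∀ j t, Measurable[ℱ t] (Lval j t) := fun j t => (hLmeas j t).measurable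
  have hqm : ∀ j t, Measurable[ℱ t] (q j t) := fun j t => (hqmeas j t).measurable
  have hχm : ∀ j t, Measurable[ℱ (t + 1)] (χ j t) := fun j t => (hχmeas j t).measurable
  have hzm : ∀ t, 1 ≤ t → ∀ j, Measurable[ℱ t] (z j t) := by
    intro t ht
    induction t, ht using Nat.le_induction with
    | base =>
      intro j
      have e : z j 1 = fun _ => (1:ℝ) := funext (hz1 j)
      rw [e]; exact measurable_const
    | succ t ht ih =>
      intro j
      have e : z j (t + 1) = fun ω =>
          z j t ω * Real.exp (-η * (χ j t ω * Lval j t ω / q j t ω)) :=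
        funext fun ω => by rw [hzrec, hℓhat]
      rw [e]
      refine Measurable.mul ((ih j).mono (hℱmono (Nat.le_succ t)) le_rfl) ?_
      exact Real.measurable_exp.comp (measurable_const.mul
        (((hχm j t).mul ((hLm j t).mono (hℱmono (Nat.le_succ t)) le_rfl)).div
          ((hqm j t).mono (hℱmono (Nat.le_succ t)) le_rfl)))
  have hpm : ∀ t, 1 ≤ t → ∀ j, Measurable[ℱ t] (p j t) := by
    intro t ht j
    have e : p j t = fun ω => z j t ω / ∑ l, z l t ω := funext fun ω => hp j t ω
    rw [e]
    exact (hzm t ht j).div (Finset.measurable_sum univ (fun l _ => hzm t ht l))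
  have hℓm : ∀ j t, 1 ≤ t → Measurable[ℱ (t + 1)] (ℓhat j t) := by
    intro j t ht
    have e : ℓhat j t = fun ω => χ j t ω * Lval j t ω / q j t ω :=
      funext fun ω => hℓhat j t ω
    rw [e]
    exact ((hχm j t).mul ((hLm j t).mono (hℱmono (Nat.le_succ t)) le_rfl)).div
      ((hqm j t).mono (hℱmono (Nat.le_succ t)) le_rfl)
  -- product bound helper
  have hbd01 : ∀ (a b B : ℝ), 0 ≤ a → a ≤ 1 → 0 ≤ b → b ≤ B → |a * b| ≤ B := by
    intro a b B ha0 ha1 hb0 hbB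
    rw [abs_of_nonneg (mul_nonneg ha0 hb0)]
    nlinarith
  -- integrability of the atoms
  have hχint : ∀ j t, Integrable (χ j t) μ := fun j t =>
    bdd_integrable (hℱ (t + 1)) _ (hχm j t) 1
      (fun ω => by rcases hχ j t ω with h | h <;> simp [h])
  have hpint : ∀ j t, 1 ≤ t → Integrable (p j t) μ := fun j t ht =>
    bdd_integrable (hℱ t) _ (hpm t ht j) 1
      (fun ω => abs_le.2 ⟨by linarith [hppos j t ht ω], hple1 j t ht ω⟩)
  have hℓint : ∀ j t, 1 ≤ t → Integrable (ℓhat j t) μ := fun j t ht =>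
    bdd_integrable (hℱ (t + 1)) _ (hℓm j t ht) (2 * μcl)
      (fun ω => abs_le.2 ⟨by linarith [hℓ0 j t ht ω], hℓub j t ht ω⟩)
  have hpℓint : ∀ j t, 1 ≤ t → Integrable (fun ω => p j t ω * ℓhat j t ω) μ := fun j t ht =>
    bdd_integrable (hℱ (t + 1)) _
      (((hpm t ht j).mono (hℱmono (Nat.le_succ t)) le_rfl).mul (hℓm j t ht)) (2 * μcl)
      (fun ω => hbd01 _ _ _ (hppos j t ht ω).le (hple1 j t ht ω) (hℓ0 j t ht ω)
        (hℓub j t ht ω))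
  have hpLint : ∀ j t, 1 ≤ t → Integrable (fun ω => p j t ω * Lval j t ω) μ := fun j t ht =>
    bdd_integrable (hℱ t) _ ((hpm t ht j).mul (hLm j t)) 1
      (fun ω => hbd01 _ _ _ (hppos j t ht ω).le (hple1 j t ht ω) (hL0 j t ω) (hL1 j t ω))
  have hpℓ2int : ∀ j t, 1 ≤ t → Integrable (fun ω => p j t ω * ℓhat j t ω ^ 2) μ :=
    fun j t ht =>
    bdd_integrable (hℱ (t + 1)) _
      (((hpm t ht j).mono (hℱmono (Nat.le_succ t)) le_rfl).mul ((hℓm j t ht).pow_const 2))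
      ((2 * μcl) ^ 2)
      (fun ω => hbd01 _ _ _ (hppos j t ht ω).le (hple1 j t ht ω) (sq_nonneg _)
        (by nlinarith [hℓ0 j t ht ω, hℓub j t ht ω]))
  -- (I1) expected estimated loss equals expected loss
  have I1 : ∀ t, 1 ≤ t → ∫ ω, ℓhat k t ω ∂μ = ∫ ω, Lval k t ω ∂μ := by
    intro t ht
    have e1 : ∀ ω, ℓhat k t ω = (Lval k t ω / q k t ω) * χ k t ω := fun ω => by
      rw [hℓhat]; ring
    have hg : Measurable[ℱ t] (fun ω => Lval k t ω / q k t ω) := (hLm k t).div (hqm k t)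
    have hgC : ∀ ω, |Lval k t ω / q k t ω| ≤ 2 * μcl := fun ω => by
      rw [abs_of_nonneg (div_nonneg (hL0 k t ω) (hqpos k t ht ω).le)]
      exact hdivbd _ _ _ hμcl0 (hL0 k t ω) (hL1 k t ω) (hqlb k t ht ω)
    calc ∫ ω, ℓhat k t ω ∂μ = ∫ ω, (Lval k t ω / q k t ω) * χ k t ω ∂μ :=
          integral_congr_ae (ae_of_all μ e1)
      _ = ∫ ω, (Lval k t ω / q k t ω) * q k t ω ∂μ :=
          key_exchange (hℱ t) _ _ (hχint k t) (hχmean k t) _ (2 * μcl) hg hgC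
      _ = ∫ ω, Lval k t ω ∂μ := integral_congr_ae (ae_of_all μ fun ω =>
          div_mul_cancel₀ _ (hqpos k t ht ω).ne')
  -- (I2)
  have I2 : ∀ t, 1 ≤ t →
      ∫ ω, (∑ j, p j t ω * ℓhat j t ω) ∂μ = ∫ ω, (∑ j, p j t ω * Lval j t ω) ∂μ := by
    intro t ht
    rw [integral_finset_sum _ (fun j _ => hpℓint j t ht),
        integral_finset_sum _ (fun j _ => hpLint j t ht)]
    refine Finset.sum_congr rfl fun j _ => ?_
    have e1 : ∀ ω, p j t ω * ℓhat j t ω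
        = (p j t ω * Lval j t ω / q j t ω) * χ j t ω := fun ω => by
      rw [hℓhat]; ring
    have hg : Measurable[ℱ t] (fun ω => p j t ω * Lval j t ω / q j t ω) :=
      ((hpm t ht j).mul (hLm j t)).div (hqm j t)
    have hpL1 : ∀ ω, p j t ω * Lval j t ω ≤ 1 := fun ω => by
      nlinarith [hppos j t ht ω, hple1 j t ht ω, hL0 j t ω, hL1 j t ω]
    have hpL0 : ∀ ω, 0 ≤ p j t ω * Lval j t ω := fun ω =>
      mul_nonneg (hppos j t ht ω).le (hL0 j t ω)
    have hgC : ∀ ω, |p j t ω * Lval j t ω / q j t ω| ≤ 2 * μcl := fun ω => by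
      rw [abs_of_nonneg (div_nonneg (hpL0 ω) (hqpos j t ht ω).le)]
      exact hdivbd _ _ _ hμcl0 (hpL0 ω) (hpL1 ω) (hqlb j t ht ω)
    calc ∫ ω, p j t ω * ℓhat j t ω ∂μ
        = ∫ ω, (p j t ω * Lval j t ω / q j t ω) * χ j t ω ∂μ :=
          integral_congr_ae (ae_of_all μ e1)
      _ = ∫ ω, (p j t ω * Lval j t ω / q j t ω) * q j t ω ∂μ :=
          key_exchange (hℱ t) _ _ (hχint j t) (hχmean j t) _ (2 * μcl) hg hgC
      _ = ∫ ω, p j t ω * Lval j t ω ∂μ := integral_congr_ae (ae_of_all μ fun ω =>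
          div_mul_cancel₀ _ (hqpos j t ht ω).ne')
  -- (I3) second moment bound
  have I3 : ∀ t, 1 ≤ t → ∫ ω, (∑ j, p j t ω * ℓhat j t ω ^ 2) ∂μ ≤ 2 * μcl := by
    intro t ht
    rw [integral_finset_sum _ (fun j _ => hpℓ2int j t ht)]
    have hq2lb : ∀ j (ω : Ω), 1 / (2 * μcl) ^ 2 ≤ q j t ω ^ 2 := by
      intro j ω
      have h1 : (1 / (2 * μcl)) ^ 2 ≤ q j t ω ^ 2 :=
        pow_le_pow_left₀ (by positivity) (hqlb j t ht ω) 2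
      calc 1 / (2 * μcl) ^ 2 = (1 / (2 * μcl)) ^ 2 := by rw [div_pow, one_pow]
        _ ≤ _ := h1
    have step1 : ∀ j : Fin K, ∫ ω, p j t ω * ℓhat j t ω ^ 2 ∂μ
        ≤ ∫ ω, 2 * μcl * p j t ω ∂μ := by
      intro j
      have e1 : ∀ ω, p j t ω * ℓhat j t ω ^ 2
          = (p j t ω * Lval j t ω ^ 2 / q j t ω ^ 2) * χ j t ω := by
        intro ω
        rcases hχ j t ω with h | h <;> rw [hℓhat, h] <;> ring
      have hg : Measurable[ℱ t] (fun ω => p j t ω * Lval j t ω ^ 2 / q j t ω ^ 2) :=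
        ((hpm t ht j).mul ((hLm j t).pow_const 2)).div ((hqm j t).pow_const 2)
      have hpL20 : ∀ ω, 0 ≤ p j t ω * Lval j t ω ^ 2 := fun ω =>
        mul_nonneg (hppos j t ht ω).le (sq_nonneg _)
      have hpL21 : ∀ ω, p j t ω * Lval j t ω ^ 2 ≤ 1 := fun ω => by
        nlinarith [hppos j t ht ω, hple1 j t ht ω, hL0 j t ω, hL1 j t ω]
      have hgC : ∀ ω, |p j t ω * Lval j t ω ^ 2 / q j t ω ^ 2| ≤ (2 * μcl) ^ 2 := fun ω => by
        rw [abs_of_nonneg (div_nonneg (hpL20 ω) (sq_nonneg _))]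
        exact hdivbd _ _ _ (by positivity) (hpL20 ω) (hpL21 ω) (hq2lb j ω)
      have e2 : ∀ ω, (p j t ω * Lval j t ω ^ 2 / q j t ω ^ 2) * q j t ω
          = p j t ω * Lval j t ω ^ 2 / q j t ω := by
        intro ω
        have hq0 : q j t ω ≠ 0 := (hqpos j t ht ω).ne'
        field_simp
      have hint1 : Integrable (fun ω => p j t ω * Lval j t ω ^ 2 / q j t ω) μ := by
        refine bdd_integrable (hℱ t) _
          (((hpm t ht j).mul ((hLm j t).pow_const 2)).div (hqm j t)) (2 * μcl) ?_
        intro ω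
        rw [abs_of_nonneg (div_nonneg (hpL20 ω) (hqpos j t ht ω).le)]
        exact hdivbd _ _ _ hμcl0 (hpL20 ω) (hpL21 ω) (hqlb j t ht ω)
      calc ∫ ω, p j t ω * ℓhat j t ω ^ 2 ∂μ
          = ∫ ω, (p j t ω * Lval j t ω ^ 2 / q j t ω ^ 2) * χ j t ω ∂μ :=
            integral_congr_ae (ae_of_all μ e1)
        _ = ∫ ω, (p j t ω * Lval j t ω ^ 2 / q j t ω ^ 2) * q j t ω ∂μ :=
            key_exchange (hℱ t) _ _ (hχint j t) (hχmean j t) _ ((2 * μcl) ^ 2) hg hgC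
        _ = ∫ ω, p j t ω * Lval j t ω ^ 2 / q j t ω ∂μ :=
            integral_congr_ae (ae_of_all μ e2)
        _ ≤ ∫ ω, 2 * μcl * p j t ω ∂μ := by
            refine integral_mono hint1 ((hpint j t ht).const_mul _) fun ω => ?_
            have hLq : Lval j t ω ^ 2 / q j t ω ≤ 2 * μcl :=
              hdivbd _ _ _ hμcl0 (sq_nonneg _)
                (by nlinarith [hL0 j t ω, hL1 j t ω]) (hqlb j t ht ω)
            have e3 : p j t ω * Lval j t ω ^ 2 / q j t ω
                = p j t ω * (Lval j t ω ^ 2 / q j t ω) := by ring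
            rw [e3]
            calc p j t ω * (Lval j t ω ^ 2 / q j t ω) ≤ p j t ω * (2 * μcl) :=
                  mul_le_mul_of_nonneg_left hLq (hppos j t ht ω).le
              _ = 2 * μcl * p j t ω := by ring
    calc ∑ j, ∫ ω, p j t ω * ℓhat j t ω ^ 2 ∂μ
        ≤ ∑ j : Fin K, ∫ ω, 2 * μcl * p j t ω ∂μ := Finset.sum_le_sum fun j _ => step1 j
      _ = 2 * μcl * ∑ j : Fin K, ∫ ω, p j t ω ∂μ := by
          simp only [integral_const_mul]
          rw [Finset.mul_sum]
      _ = 2 * μcl * ∫ ω, (∑ j, p j t ω) ∂μ := by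
          rw [integral_finset_sum _ (fun j _ => hpint j t ht)]
      _ = 2 * μcl := by
          rw [integral_congr_ae (ae_of_all μ (hpsum t ht))]
          simp
  -- deterministic regret inequality, pointwise in ω
  have det : ∀ ω, ∑ t ∈ Finset.Icc 1 T, ∑ j, p j t ω * ℓhat j t ω ≤
      (∑ t ∈ Finset.Icc 1 T, ℓhat k t ω) + Real.log K / η
        + η / 2 * ∑ t ∈ Finset.Icc 1 T, ∑ j, p j t ω * ℓhat j t ω ^ 2 := fun ω =>
    det_regret hK hη T (fun j s => ℓhat j s ω) (fun j s hs => hℓ0 j s hs ω)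
      (fun j s => z j s ω) (fun j => hz1 j ω) (fun j s => hzrec j s ω)
      (fun j s => p j s ω) (fun j s => hp j s ω) k
  -- integrate the deterministic inequality
  have hFint : Integrable (fun ω => ∑ t ∈ Finset.Icc 1 T, ∑ j, p j t ω * ℓhat j t ω) μ :=
    integrable_finset_sum _ (fun t htm => integrable_finset_sum _
      (fun j _ => hpℓint j t (mem_Icc.mp htm).1))
  have hBint : Integrable (fun ω => ∑ t ∈ Finset.Icc 1 T, ∑ j, p j t ω * ℓhat j t ω ^ 2) μ :=
    integrable_finset_sum _ (fun t htm => integrable_finset_sum _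
      (fun j _ => hpℓ2int j t (mem_Icc.mp htm).1))
  have hℓkint : Integrable (fun ω => ∑ t ∈ Finset.Icc 1 T, ℓhat k t ω) μ :=
    integrable_finset_sum _ (fun t htm => hℓint k t (mem_Icc.mp htm).1)
  have h1int : Integrable (fun ω => (∑ t ∈ Finset.Icc 1 T, ℓhat k t ω)
      + Real.log K / η) μ := hℓkint.add (integrable_const _)
  have h2int : Integrable (fun ω =>
      η / 2 * ∑ t ∈ Finset.Icc 1 T, ∑ j, p j t ω * ℓhat j t ω ^ 2) μ := hBint.const_mul _
  have hGint : Integrable (fun ω => (∑ t ∈ Finset.Icc 1 T, ℓhat k t ω) + Real.log K / η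
      + η / 2 * ∑ t ∈ Finset.Icc 1 T, ∑ j, p j t ω * ℓhat j t ω ^ 2) μ := h1int.add h2int
  have main := integral_mono hFint hGint det
  have lhs_eq : ∫ ω, (∑ t ∈ Finset.Icc 1 T, ∑ j, p j t ω * ℓhat j t ω) ∂μ
      = ∑ t ∈ Finset.Icc 1 T, ∫ ω, (∑ j, p j t ω * Lval j t ω) ∂μ := by
    rw [integral_finset_sum _ (fun t htm => integrable_finset_sum _
      (fun j _ => hpℓint j t (mem_Icc.mp htm).1))]
    exact Finset.sum_congr rfl fun t htm => I2 t (mem_Icc.mp htm).1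
  have rhs_eq : ∫ ω, ((∑ t ∈ Finset.Icc 1 T, ℓhat k t ω) + Real.log K / η
        + η / 2 * ∑ t ∈ Finset.Icc 1 T, ∑ j, p j t ω * ℓhat j t ω ^ 2) ∂μ
      = (∑ t ∈ Finset.Icc 1 T, ∫ ω, Lval k t ω ∂μ) + Real.log K / η
        + η / 2 * ∫ ω, (∑ t ∈ Finset.Icc 1 T, ∑ j, p j t ω * ℓhat j t ω ^ 2) ∂μ := by
    rw [integral_add h1int h2int, integral_add hℓkint (integrable_const _),
        integral_const_mul, integral_const]
    simp only [probReal_univ, ENNReal.toReal_one, smul_eq_mul, one_mul]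
    congr 1
    congr 1
    rw [integral_finset_sum _ (fun t htm => hℓint k t (mem_Icc.mp htm).1)]
    exact Finset.sum_congr rfl fun t htm => I1 t (mem_Icc.mp htm).1
  have B_le : ∫ ω, (∑ t ∈ Finset.Icc 1 T, ∑ j, p j t ω * ℓhat j t ω ^ 2) ∂μ
      ≤ (T:ℝ) * (2 * μcl) := by
    rw [integral_finset_sum _ (fun t htm => integrable_finset_sum _
      (fun j _ => hpℓ2int j t (mem_Icc.mp htm).1))]
    calc ∑ t ∈ Finset.Icc 1 T, ∫ ω, (∑ j, p j t ω * ℓhat j t ω ^ 2) ∂μ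
        ≤ ∑ _t ∈ Finset.Icc 1 T, (2 * μcl) :=
          Finset.sum_le_sum fun t htm => I3 t (mem_Icc.mp htm).1
      _ = (T:ℝ) * (2 * μcl) := by
          rw [Finset.sum_const, Nat.card_Icc]
          simp [nsmul_eq_mul]
  rw [lhs_eq, rhs_eq] at main
  have hfin : η / 2 * ∫ ω, (∑ t ∈ Finset.Icc 1 T, ∑ j, p j t ω * ℓhat j t ω ^ 2) ∂μ
      ≤ η / 2 * ((T:ℝ) * (2 * μcl)) :=
    mul_le_mul_of_nonneg_left B_le (by linarith)
  have : η / 2 * ((T:ℝ) * (2 * μcl)) = η * μcl * T := by ring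
  linarith [main, hfin]
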